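/- Let d ≥ 1 and let f, g : ℤ^d → [0,∞) be supported in {0,1}^d. Then ∑_{m ∈ ℤ^d} (f ⊛ g)(m) ≥ (∑_{u ∈ ℤ^d} f(u)^{2/log₂ 3})^{(log₂ 3)/2} · (∑_{v ∈ ℤ^d} g(v)^{2/log₂ 3})^{(log₂ 3)/2}, where (f ⊛ g)(m) := sup_{u+v=m} f(u)g(v) is the sup-convolution. -/

import Mathlib

open scoped BigOperators ENNReal

/-- Convolution of two functions on `ℤ^d`. -/
noncomputable def cconv {d : ℕ} (f g : (Fin d → ℤ) → ℝ) : (Fin d → ℤ) → ℝ :=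
  fun m => ∑' u : Fin d → ℤ, f u * g (m - u)

/-- A point of `ℤ^d` lies in the hypercube `{0,1}^d`. -/
def InCube {d : ℕ} (x : Fin d → ℤ) : Prop := ∀ i, x i = 0 ∨ x i = 1

/-- A function on `ℤ^d` is supported in `{0,1}^d`. -/
def SupportedInCube {d : ℕ} (f : (Fin d → ℤ) → ℝ) : Prop :=
  ∀ x : Fin d → ℤ, ¬ InCube x → f x = 0

/-- The `ℓ^s` norm of a function on `ℤ^d` (for `0 < s < ∞`). -/
noncomputable def lnorm {d : ℕ} (s : ℝ) (f : (Fin d → ℤ) → ℝ) : ℝ :=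
  (∑' x : Fin d → ℤ, |f x| ^ s) ^ (1 / s)

/-- The sup-convolution `(f ⊛ g)(m) = sup_{u+v=m} f(u) g(v)`. -/
noncomputable def supConv {d : ℕ} (f g : (Fin d → ℤ) → ℝ) : (Fin d → ℤ) → ℝ :=
  fun m => ⨆ u : Fin d → ℤ, f u * g (m - u)

namespace PLH

open Real Set

set_option linter.unusedSectionVars false
set_option linter.unusedVariables false

/-- superadditivity of rpow -/
lemma rpow_superadd {p : ℝ} (hp : 1 ≤ p) {x y : ℝ} (hx : 0 ≤ x) (hy : 0 ≤ y) :
    x ^ p + y ^ p ≤ (x + y) ^ p := by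
  have h0 : (0:ℝ) < p := lt_of_lt_of_le one_pos hp
  rcases eq_or_lt_of_le (add_nonneg hx hy) with h | h
  · have hx0 : x = 0 := by nlinarith
    have hy0 : y = 0 := by nlinarith
    simp [hx0, hy0, Real.zero_rpow (ne_of_gt h0)]
  · have key : ∀ z : ℝ, 0 ≤ z → z ≤ x + y → z ^ p ≤ z * (x + y) ^ (p - 1) := by
      intro z hz hzle
      rcases eq_or_lt_of_le hz with h1 | h1
      · rw [← h1, Real.zero_rpow (ne_of_gt h0), zero_mul]
      · have e1 : z ^ p = z * z ^ (p - 1) := by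
          nth_rewrite 2 [← Real.rpow_one z]
          rw [← Real.rpow_add h1]; ring_nf
        rw [e1]
        exact mul_le_mul_of_nonneg_left
          (Real.rpow_le_rpow (le_of_lt h1) hzle (by linarith)) hz
    have e2 : (x + y) ^ p = (x + y) * (x + y) ^ (p - 1) := by
      nth_rewrite 1 [show p = 1 + (p-1) by ring]
      rw [Real.rpow_add h, Real.rpow_one]
    calc x ^ p + y ^ p ≤ x * (x+y)^(p-1) + y * (x+y)^(p-1) :=
          add_le_add (key x hx (by linarith)) (key y hy (by linarith))
      _ = (x + y) * (x+y)^(p-1) := by ring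
      _ = (x + y) ^ p := e2.symm

/-- Layer 3: the key one-variable inequality for the slope parameter r. -/
lemma layer3 {r : ℝ} (hr2 : 2 < r) (hr3 : r ≤ 3) (hrid : ((3:ℝ)/2) ^ r = 3) :
    ∀ y ∈ Icc (0:ℝ) 1, 1 + y + y^2 ≤ (1 + y/2) ^ r := by
  set G : ℝ → ℝ := fun y => r * Real.log (1 + y/2) - Real.log (1 + y + y^2) with hG
  have harg1 : ∀ y : ℝ, 0 ≤ y → (0:ℝ) < 1 + y/2 := by intro y hy; linarith
  have harg2 : ∀ y : ℝ, 0 ≤ y → (0:ℝ) < 1 + y + y^2 := by intro y hy; nlinarith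
  have hderiv : ∀ y : ℝ, 0 ≤ y →
      HasDerivAt G (r / (2 + y) - (1 + 2*y) / (1 + y + y^2)) y := by
    intro y hy
    have h1 : HasDerivAt (fun y : ℝ => 1 + y/2) (1/2) y := by
      simpa using ((hasDerivAt_id y).div_const 2).const_add 1
    have h2 : HasDerivAt (fun y : ℝ => 1 + y + y^2) (1 + 2*y) y := by
      have := ((hasDerivAt_id y).const_add 1).add (hasDerivAt_pow 2 y)
      exact this.congr_deriv (by norm_num)
    have h1l := (h1.log (ne_of_gt (harg1 y hy))).const_mul r
    have h2l := h2.log (ne_of_gt (harg2 y hy))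
    have := h1l.sub h2l
    refine this.congr_deriv ?_
    have h2y : (2:ℝ) + y ≠ 0 := by linarith
    field_simp
  set D : ℝ := Real.sqrt (3*(3-r)*(1+r)) with hD
  have hDnn : 0 ≤ D := Real.sqrt_nonneg _
  have hD2 : D^2 = 3*(3-r)*(1+r) := Real.sq_sqrt (by nlinarith)
  set y1 : ℝ := ((5-r) - D)/(2*(r-2)) with hy1
  set y2 : ℝ := ((5-r) + D)/(2*(r-2)) with hy2
  have hr2' : (0:ℝ) < r - 2 := by linarith
  have hDle : D ≤ 5 - r := by
    have : D ≤ Real.sqrt ((5-r)^2) := Real.sqrt_le_sqrt (by nlinarith)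
    rwa [Real.sqrt_sq (by linarith)] at this
  have hy10 : 0 ≤ y1 := div_nonneg (by linarith) (by linarith)
  have hy11 : y1 ≤ 1 := by
    rw [hy1, div_le_one (by linarith)]
    have h93 : 9 - 3*r ≤ D := by
      rcases le_or_gt (9 - 3*r) 0 with h | h
      · linarith
      · rw [hD]
        refine (Real.le_sqrt (by linarith) (by nlinarith)).2 ?_
        nlinarith [mul_nonneg (by linarith : (0:ℝ) ≤ 3-r) (by linarith : (0:ℝ) ≤ 4*r-8)]
    linarith
  have hy21 : 1 ≤ y2 := by
    rw [hy2, le_div_iff₀ (by linarith)]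
    linarith
  have hsum : y1 + y2 = (5-r)/(r-2) := by rw [hy1, hy2]; field_simp; ring
  have hprod : y1 * y2 = 1 := by
    rw [hy1, hy2, div_mul_div_comm, div_eq_one_iff_eq (by positivity)]
    linear_combination -hD2
  have hQ : ∀ y : ℝ, r*(1 + y + y^2) - (2+y)*(1+2*y) = (r-2)*(y - y1)*(y - y2) := by
    intro y
    have e : (r-2)*(y - y1)*(y - y2)
        = (r-2)*y^2 - (r-2)*(y1+y2)*y + (r-2)*(y1*y2) := by ring
    rw [e, hsum, hprod]
    field_simp
    ring
  have hmono : MonotoneOn G (Icc 0 y1) := by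
    apply monotoneOn_of_deriv_nonneg (convex_Icc _ _)
    · intro y hy
      exact ((hderiv y hy.1).differentiableAt).continuousAt.continuousWithinAt
    · intro y hy
      rw [interior_Icc] at hy
      exact ((hderiv y (le_of_lt hy.1)).differentiableAt).differentiableWithinAt
    · intro y hy
      rw [interior_Icc] at hy
      obtain ⟨hy0, hyy1⟩ := hy
      rw [(hderiv y (le_of_lt hy0)).deriv]
      have hq : 0 ≤ r*(1 + y + y^2) - (2+y)*(1+2*y) := by
        rw [hQ]
        have : 0 ≤ (y1 - y) * (y2 - y) :=
          mul_nonneg (by linarith) (by nlinarith)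
        nlinarith
      rw [sub_nonneg, div_le_div_iff₀ (harg2 y (le_of_lt hy0)) (by linarith)]
      nlinarith
  have hanti : AntitoneOn G (Icc y1 1) := by
    apply antitoneOn_of_deriv_nonpos (convex_Icc _ _)
    · intro y hy
      exact ((hderiv y (le_trans hy10 hy.1)).differentiableAt).continuousAt.continuousWithinAt
    · intro y hy
      rw [interior_Icc] at hy
      exact ((hderiv y (le_trans hy10 (le_of_lt hy.1))).differentiableAt).differentiableWithinAt
    · intro y hy
      rw [interior_Icc] at hy
      obtain ⟨hyy1, hy1'⟩ := hy
      have hy0 : 0 ≤ y := le_trans hy10 (le_of_lt hyy1)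
      rw [(hderiv y hy0).deriv]
      have hq : r*(1 + y + y^2) - (2+y)*(1+2*y) ≤ 0 := by
        rw [hQ]
        have h1 : 0 ≤ y - y1 := by linarith
        have h2 : (0:ℝ) ≤ y2 - y := by linarith
        nlinarith [mul_nonneg h1 h2]
      rw [sub_nonpos, div_le_div_iff₀ (by linarith) (harg2 y hy0)]
      nlinarith
  have hG0 : G 0 = 0 := by simp [hG]
  have hG1 : G 1 = 0 := by
    have hkey : r * Real.log ((3:ℝ)/2) = Real.log 3 := by
      rw [← Real.log_rpow (by norm_num : (0:ℝ) < 3/2), hrid]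
    simp only [hG]
    norm_num
    linarith [hkey]
  intro y hy
  have hGy : 0 ≤ G y := by
    rcases le_total y y1 with h | h
    · have := hmono (left_mem_Icc.2 hy10) ⟨hy.1, h⟩ hy.1
      rw [hG0] at this; exact this
    · have := hanti ⟨h, hy.2⟩ (right_mem_Icc.2 hy11) hy.2
      rw [hG1] at this; exact this
  have h2' := harg2 y hy.1
  have h1' := harg1 y hy.1
  have hlog : Real.log (1 + y + y^2) ≤ Real.log ((1 + y/2) ^ r) := by
    rw [Real.log_rpow h1']
    simp only [hG] at hGy; linarith
  exact (Real.log_le_log_iff h2' (Real.rpow_pos_of_pos h1' r)).1 hlog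


section
variable {p : ℝ} (hp1 : 1 < p) (hp43 : p ≤ 4/3) (hp32 : (3:ℝ)^(p/2) = 2)
include hp1 hp43 hp32

lemma hplog : p * Real.log 3 = 2 * Real.log 2 := by
  have := Real.log_rpow (by norm_num : (0:ℝ) < 3) (p/2)
  rw [hp32] at this
  linarith [this]

lemma key_ineq : ∀ x : ℝ, 1 ≤ x →
    2 * x^(p-1) * (x^2+x+1)^((2-p)/2) ≤ 2*x + 1 := by
  intro x hx
  have hx0 : (0:ℝ) < x := by linarith
  set r : ℝ := 2/(2-p) with hrdef
  have h2p : (0:ℝ) < 2 - p := by linarith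
  have hr2 : 2 < r := by
    rw [hrdef, lt_div_iff₀ h2p]; linarith
  have hr3 : r ≤ 3 := by
    rw [hrdef, div_le_iff₀ h2p]; linarith
  have hrid : ((3:ℝ)/2) ^ r = 3 := by
    have hlog : Real.log ((3:ℝ)/2) * r = Real.log 3 := by
      rw [Real.log_div (by norm_num) (by norm_num), hrdef]
      field_simp
      linear_combination hplog hp1 hp43 hp32
    rw [Real.rpow_def_of_pos (by norm_num : (0:ℝ) < 3/2), hlog, Real.exp_log (by norm_num)]
  set y : ℝ := 1/x with hydef
  have hy : y ∈ Icc (0:ℝ) 1 := ⟨by positivity, by rw [hydef]; exact div_le_one_of_le₀ hx (by linarith)⟩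
  have h3 := layer3 hr2 hr3 hrid y hy
  have hb : (0:ℝ) < 1 + y/2 := by linarith [hy.1]
  have ha : (0:ℝ) ≤ 1 + y + y^2 := by nlinarith [hy.1]
  have hrpos : (0:ℝ) < r := by linarith
  have h4 : (1 + y + y^2) ^ (1/r) ≤ 1 + y/2 := by
    calc (1 + y + y^2) ^ (1/r) ≤ ((1 + y/2)^r) ^ (1/r) :=
          Real.rpow_le_rpow ha h3 (by positivity)
      _ = (1 + y/2) ^ (r * (1/r)) := by rw [← Real.rpow_mul hb.le]
      _ = 1 + y/2 := by rw [mul_one_div_cancel (ne_of_gt hrpos), Real.rpow_one]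
  have hinv : 1/r = (2-p)/2 := by rw [hrdef, one_div_div]
  have hA : (0:ℝ) < x^2 + x + 1 := by nlinarith
  have hae : 1 + y + y^2 = (x^2+x+1)/x^2 := by
    rw [hydef]; field_simp
  have h5 : ((x^2+x+1)/x^2) ^ ((2-p)/2) ≤ 1 + 1/(2*x) := by
    rw [← hae, ← hinv]
    calc (1 + y + y^2) ^ (1/r) ≤ 1 + y/2 := h4
      _ = 1 + 1/(2*x) := by rw [hydef]; ring
  have hxsq : ((x^2:ℝ)) ^ ((2-p)/2) = x ^ (2-p) := by
    rw [← Real.rpow_natCast x 2, ← Real.rpow_mul hx0.le]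
    congr 1
    push_cast
    ring
  have h6 : (x^2+x+1) ^ ((2-p)/2) ≤ (1 + 1/(2*x)) * x^(2-p) := by
    rw [Real.div_rpow hA.le (by positivity), hxsq] at h5
    rw [div_le_iff₀ (by positivity)] at h5
    linarith [h5]
  have hxx : x^(p-1) * x^(2-p) = x := by
    rw [← Real.rpow_add hx0]; norm_num
  calc 2 * x^(p-1) * (x^2+x+1)^((2-p)/2)
      ≤ 2 * x^(p-1) * ((1 + 1/(2*x)) * x^(2-p)) := by
        apply mul_le_mul_of_nonneg_left h6 (by positivity)
    _ = 2 * (x^(p-1) * x^(2-p)) * (1 + 1/(2*x)) := by ring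
    _ = 2 * x * (1 + 1/(2*x)) := by rw [hxx]
    _ = 2*x + 1 := by field_simp
lemma layer2 : ∀ x : ℝ, 1 ≤ x → x^p + 1 ≤ (x^2+x+1)^(p/2) := by
  have hp0 : (0:ℝ) < p := by linarith
  set η : ℝ → ℝ := fun x => (x^2+x+1)^(p/2) - x^p - 1 with hη
  have hderiv : ∀ x : ℝ, 1 ≤ x → HasDerivAt η
      ((p/2) * (x^2+x+1)^(p/2-1) * (2*x+1) - p * x^(p-1)) x := by
    intro x hx
    have hx0 : (0:ℝ) < x := by linarith
    have hA : (0:ℝ) < x^2 + x + 1 := by nlinarith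
    have hpoly : HasDerivAt (fun x : ℝ => x^2+x+1) (2*x+1) x := by
      have := ((hasDerivAt_pow 2 x).add (hasDerivAt_id x)).add_const 1
      simpa using this
    have hrp : HasDerivAt (fun t : ℝ => t ^ (p/2)) ((p/2) * (x^2+x+1)^(p/2-1)) (x^2+x+1) :=
      Real.hasDerivAt_rpow_const (Or.inl (ne_of_gt hA))
    have h1 := hrp.comp x hpoly
    have h2 : HasDerivAt (fun x : ℝ => x ^ p) (p * x^(p-1)) x :=
      Real.hasDerivAt_rpow_const (Or.inl (ne_of_gt hx0))
    exact (h1.sub h2).sub_const 1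
  have hmono : MonotoneOn η (Ici 1) := by
    apply monotoneOn_of_deriv_nonneg (convex_Ici _)
    · intro x hx
      exact ((hderiv x hx).differentiableAt).continuousAt.continuousWithinAt
    · intro x hx
      rw [interior_Ici] at hx
      exact ((hderiv x (le_of_lt hx)).differentiableAt).differentiableWithinAt
    · intro x hx
      rw [interior_Ici] at hx
      have hx1 : (1:ℝ) ≤ x := le_of_lt hx
      have hx0 : (0:ℝ) < x := by linarith
      have hA : (0:ℝ) < x^2 + x + 1 := by nlinarith
      rw [(hderiv x hx1).deriv]
      have hk := key_ineq hp1 hp43 hp32 x hx1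
      have hmul : (0:ℝ) ≤ (p/2) * (x^2+x+1)^(p/2-1) := by positivity
      have := mul_le_mul_of_nonneg_left hk hmul
      have hAc : (x^2+x+1)^(p/2-1) * (x^2+x+1)^((2-p)/2) = 1 := by
        rw [← Real.rpow_add hA, show p/2-1+(2-p)/2 = 0 by ring, Real.rpow_zero]
      have e : p / 2 * (x^2+x+1)^(p/2-1) * (2 * x^(p-1) * (x^2+x+1)^((2-p)/2))
          = p * x^(p-1) * ((x^2+x+1)^(p/2-1) * (x^2+x+1)^((2-p)/2)) := by ring
      rw [e, hAc, mul_one] at this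
      linarith
  intro x hx
  have h1 : η 1 = 0 := by
    simp only [hη]
    norm_num
    rw [show (3:ℝ) = 1^2+1+1 by norm_num] at hp32
    linarith [hp32]
  have := hmono (mem_Ici.2 le_rfl) (mem_Ici.2 hx) hx
  rw [h1] at this
  simp only [hη] at this
  linarith
lemma layer2' : ∀ t : ℝ, 0 < t → t^p + 1 ≤ (t^2+t+1)^(p/2) := by
  intro t ht
  rcases le_or_gt 1 t with h | h
  · exact layer2 hp1 hp43 hp32 t h
  · have hx : (1:ℝ) ≤ 1/t := by rw [le_div_iff₀ ht]; linarith
    have h2 := layer2 hp1 hp43 hp32 (1/t) hx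
    have htp : (0:ℝ) < t^p := Real.rpow_pos_of_pos ht p
    have e1 : t^p * ((1/t)^p) = 1 := by
      rw [← Real.mul_rpow ht.le (by positivity)]
      rw [mul_one_div_cancel (ne_of_gt ht), Real.one_rpow]
    have e2 : t^p * (((1/t)^2+(1/t)+1)^(p/2)) = (t^2+t+1)^(p/2) := by
      have : t^p = (t^2) ^ (p/2) := by
        rw [← Real.rpow_natCast t 2, ← Real.rpow_mul ht.le]
        congr 1
        push_cast
        ring
      rw [this, ← Real.mul_rpow (by positivity) (by positivity)]
      congr 1
      field_simp
      ring
    have := mul_le_mul_of_nonneg_left h2 htp.le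
    rw [mul_add, e1, mul_one, e2] at this
    linarith
lemma boundary_case : ∀ b : ℝ, 0 < b → (1+b^p)*(1+(1/b)^p) ≤ (1+b+1/b)^p := by
  intro b hb
  have hbp : (0:ℝ) < b^p := Real.rpow_pos_of_pos hb p
  have h2 := layer2' hp1 hp43 hp32 b hb
  have hA : (0:ℝ) < b^2+b+1 := by nlinarith
  have hsq : (b^p+1)^2 ≤ (b^2+b+1)^p := by
    have h := mul_self_le_mul_self (by positivity : (0:ℝ) ≤ b^p+1) h2
    calc (b^p+1)^2 = (b^p+1)*(b^p+1) := by ring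
      _ ≤ (b^2+b+1)^(p/2) * (b^2+b+1)^(p/2) := h
      _ = (b^2+b+1)^p := by
          rw [← Real.rpow_add hA]; congr 1; ring
  have e1 : 1+b+1/b = (b^2+b+1)/b := by field_simp; ring
  have e2 : ((b^2+b+1)/b)^p = (b^2+b+1)^p / b^p := Real.div_rpow hA.le hb.le p
  have e3 : (1+b^p)*(1+(1/b)^p) = (b^p+1)^2/b^p := by
    rw [Real.div_rpow (by norm_num : (0:ℝ) ≤ 1) hb.le p, Real.one_rpow]
    field_simp
    ring
  rw [e1, e2, e3]
  gcongr

lemma one_add_rpow (t : ℝ) (ht : 0 ≤ t) : 1 + t^p ≤ (1+t)^p := by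
  have h := rpow_superadd (le_of_lt hp1) (by norm_num : (0:ℝ) ≤ 1) ht
  rwa [Real.one_rpow] at h

lemma main2var {b c : ℝ} (hb : 0 ≤ b) (hc : 0 ≤ c) (hbc : b*c ≤ 1) :
    (1+b^p)*(1+c^p) ≤ (1+b+c)^p := by
  have hp0 : (0:ℝ) < p := by linarith
  rcases eq_or_lt_of_le hc with hc0 | hc0
  · rw [← hc0, Real.zero_rpow (ne_of_gt hp0)]
    simpa using one_add_rpow hp1 hp43 hp32 b hb
  rcases eq_or_lt_of_le hb with hb0 | hb0
  · rw [← hb0, Real.zero_rpow (ne_of_gt hp0)]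
    have := one_add_rpow hp1 hp43 hp32 c hc
    calc (1+0)*(1+c^p) = 1 + c^p := by ring
      _ ≤ (1+c)^p := this
      _ = (1+0+c)^p := by norm_num
  -- now b, c > 0
  have hcle : c ≤ 1/b := by rw [le_div_iff₀ hb0]; linarith [mul_comm b c ▸ hbc]
  have hbppos : (0:ℝ) < b^p := Real.rpow_pos_of_pos hb0 p
  have hp1' : (0:ℝ) < p - 1 := by linarith
  set K : ℝ := (1+b^p)^(1/(p-1)) with hK
  have hKpos : (0:ℝ) < K := Real.rpow_pos_of_pos (by linarith) _
  have hK1 : 1 < K := by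
    rw [hK]
    exact (Real.one_lt_rpow_iff_of_pos (by linarith)).2 (Or.inl ⟨by linarith, by positivity⟩)
  have hKp : K^(p-1) = 1+b^p := by
    rw [hK, ← Real.rpow_mul (by linarith : (0:ℝ) ≤ 1+b^p),
      one_div_mul_cancel (ne_of_gt hp1'), Real.rpow_one]
  set cs : ℝ := (1+b)/(K-1) with hcs
  have hcspos : (0:ℝ) < cs := div_pos (by linarith) (by linarith)
  set ψ : ℝ → ℝ := fun c => (1+b+c)^p - (1+b^p)*(1+c^p) with hψ
  have hψderiv : ∀ t : ℝ, 0 < t →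
      HasDerivAt ψ (p*(1+b+t)^(p-1) - (1+b^p)*(p*t^(p-1))) t := by
    intro t ht
    have h1 : HasDerivAt (fun t : ℝ => 1+b+t) 1 t := by
      simpa using (hasDerivAt_id t).const_add (1+b)
    have h2 : HasDerivAt (fun s : ℝ => s ^ p) (p * (1+b+t)^(p-1)) (1+b+t) :=
      Real.hasDerivAt_rpow_const (Or.inl (by positivity : (1+b+t) ≠ 0))
    have h3 := h2.comp t h1
    have h4 : HasDerivAt (fun t : ℝ => (1+b^p)*(1+t^p)) ((1+b^p)*(p*t^(p-1))) t := by
      have := (Real.hasDerivAt_rpow_const (p := p) (Or.inl (ne_of_gt ht))).const_add 1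
      exact this.const_mul (1+b^p)
    have := h3.sub h4
    exact this.congr_deriv (by simp)
  have hψcont : Continuous ψ := by
    have hrp : Continuous fun t : ℝ => t ^ p :=
      continuous_iff_continuousAt.2 fun x => Real.continuousAt_rpow_const x p (Or.inr hp0.le)
    have h1 : Continuous fun t : ℝ => (1+b+t)^p :=
      ((continuous_const.add continuous_id).rpow_const fun x => Or.inr hp0.le)
    exact h1.sub (continuous_const.mul (continuous_const.add hrp))
  have hψ0 : 0 ≤ ψ 0 := by
    simp only [hψ]
    rw [Real.zero_rpow (ne_of_gt hp0)]
    have := one_add_rpow hp1 hp43 hp32 b hb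
    simp only [add_zero, mul_one]
    linarith
  have hψb : 0 ≤ ψ (1/b) := by
    simp only [hψ]
    have := boundary_case hp1 hp43 hp32 b hb0
    linarith
  have key : 0 ≤ ψ c := by
    rcases le_total c cs with hccs | hccs
    · -- monotone on [0, cs]
      have hmono : MonotoneOn ψ (Icc 0 cs) := by
        apply monotoneOn_of_deriv_nonneg (convex_Icc _ _) hψcont.continuousOn
        · intro t ht
          rw [interior_Icc] at ht
          exact ((hψderiv t ht.1).differentiableAt).differentiableWithinAt
        · intro t ht
          rw [interior_Icc] at ht
          obtain ⟨ht0, htcs⟩ := ht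
          rw [(hψderiv t ht0).deriv, sub_nonneg]
          have hKc : K*t ≤ 1+b+t := by
            have : t*(K-1) ≤ 1+b := by
              rw [← le_div_iff₀ (by linarith : (0:ℝ) < K-1)]
              exact le_of_lt htcs
            nlinarith
          calc (1+b^p)*(p*t^(p-1)) = p*((K*t)^(p-1)) := by
                rw [Real.mul_rpow hKpos.le (le_of_lt ht0), hKp]; ring
            _ ≤ p*((1+b+t)^(p-1)) := by
                apply mul_le_mul_of_nonneg_left _ hp0.le
                exact Real.rpow_le_rpow (by positivity) hKc (le_of_lt hp1')
      have := hmono (left_mem_Icc.2 hcspos.le) ⟨hc, hccs⟩ hc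
      linarith [hψ0]
    · -- antitone on [cs, 1/b]
      have hanti : AntitoneOn ψ (Icc cs (1/b)) := by
        apply antitoneOn_of_deriv_nonpos (convex_Icc _ _) hψcont.continuousOn
        · intro t ht
          rw [interior_Icc] at ht
          exact ((hψderiv t (lt_trans hcspos ht.1)).differentiableAt).differentiableWithinAt
        · intro t ht
          rw [interior_Icc] at ht
          obtain ⟨htcs, htb⟩ := ht
          have ht0 : (0:ℝ) < t := lt_trans hcspos htcs
          rw [(hψderiv t ht0).deriv, sub_nonpos]
          have hKc : 1+b+t ≤ K*t := by
            have : 1+b ≤ t*(K-1) := by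
              rw [← div_le_iff₀ (by linarith : (0:ℝ) < K-1)]
              exact le_of_lt htcs
            nlinarith
          calc p*((1+b+t)^(p-1)) ≤ p*((K*t)^(p-1)) := by
                apply mul_le_mul_of_nonneg_left _ hp0.le
                exact Real.rpow_le_rpow (by positivity) hKc (le_of_lt hp1')
            _ = (1+b^p)*(p*t^(p-1)) := by
                rw [Real.mul_rpow hKpos.le ht0.le, hKp]; ring
      exact le_trans hψb (hanti ⟨hccs, hcle⟩ (right_mem_Icc.2 (le_trans hccs hcle)) hcle)
  simpa [hψ] using key

lemma corner_aux {a b c d : ℝ} (ha : 0 ≤ a) (hb : 0 ≤ b) (hc : 0 ≤ c) (hd : 0 ≤ d)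
    (h : b*c ≤ a*d) :
    (a^p+b^p)^(1/p) * (c^p+d^p)^(1/p) ≤ a*c + a*d + b*d := by
  have hp0 : (0:ℝ) < p := by linarith
  have hrpinv : ∀ t : ℝ, 0 ≤ t → (t^p)^(1/p) = t := by
    intro t ht
    rw [← Real.rpow_mul ht, mul_one_div_cancel (ne_of_gt hp0), Real.rpow_one]
  have hp0' : (1:ℝ)/p ≠ 0 := ne_of_gt (by positivity)
  rcases eq_or_lt_of_le ha with ha0 | ha0
  · have hbc : b*c = 0 := le_antisymm (by nlinarith) (mul_nonneg hb hc)
    subst ha0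
    rcases mul_eq_zero.1 hbc with hb0 | hc0
    · subst hb0
      simp only [Real.zero_rpow (ne_of_gt hp0), add_zero, zero_add,
        Real.zero_rpow hp0', zero_mul, mul_zero]
      positivity
    · subst hc0
      simp only [Real.zero_rpow (ne_of_gt hp0), add_zero, zero_add,
        zero_mul, mul_zero]
      rw [hrpinv b hb, hrpinv d hd]
  rcases eq_or_lt_of_le hd with hd0 | hd0
  · have hbc : b*c = 0 := le_antisymm (by nlinarith) (mul_nonneg hb hc)
    subst hd0
    rcases mul_eq_zero.1 hbc with hb0 | hc0
    · subst hb0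
      simp only [Real.zero_rpow (ne_of_gt hp0), add_zero, zero_add,
        zero_mul, mul_zero]
      rw [hrpinv a ha, hrpinv c hc]
    · subst hc0
      simp only [Real.zero_rpow (ne_of_gt hp0), add_zero, zero_add,
        Real.zero_rpow hp0', zero_mul, mul_zero]
      positivity
  -- a, d > 0
  set β : ℝ := b/a with hβ
  set γ : ℝ := c/d with hγ
  have hβ0 : 0 ≤ β := div_nonneg hb ha0.le
  have hγ0 : 0 ≤ γ := div_nonneg hc hd0.le
  have hβγ : β*γ ≤ 1 := by
    rw [hβ, hγ, div_mul_div_comm, div_le_one (by positivity)]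
    nlinarith
  have h2 := main2var hp1 hp43 hp32 hβ0 hγ0 hβγ
  have e1 : a^p * (1+β^p) = a^p + b^p := by
    rw [mul_add, mul_one, ← Real.mul_rpow ha0.le hβ0, hβ, mul_div_cancel₀ b (ne_of_gt ha0)]
  have e2 : d^p * (1+γ^p) = d^p + c^p := by
    rw [mul_add, mul_one, ← Real.mul_rpow hd0.le hγ0, hγ, mul_div_cancel₀ c (ne_of_gt hd0)]
  have e3 : (a*d)^p * (1+β+γ)^p = (a*c + a*d + b*d)^p := by
    rw [← Real.mul_rpow (by positivity) (by positivity)]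
    congr 1
    rw [hβ, hγ]
    field_simp
    ring
  have h3 : (a^p+b^p) * (c^p+d^p) ≤ (a*c+a*d+b*d)^p := by
    calc (a^p+b^p)*(c^p+d^p) = (a^p*(1+β^p)) * (d^p*(1+γ^p)) := by rw [e1, e2]; ring
      _ = (a*d)^p * ((1+β^p)*(1+γ^p)) := by
          rw [Real.mul_rpow ha0.le hd0.le]; ring
      _ ≤ (a*d)^p * (1+β+γ)^p := by
          apply mul_le_mul_of_nonneg_left h2 (by positivity)
      _ = (a*c+a*d+b*d)^p := e3
  calc (a^p+b^p)^(1/p) * (c^p+d^p)^(1/p)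
      = ((a^p+b^p)*(c^p+d^p))^(1/p) := by
        rw [Real.mul_rpow (by positivity) (by positivity)]
    _ ≤ ((a*c+a*d+b*d)^p)^(1/p) := by
        apply Real.rpow_le_rpow (by positivity) h3 (by positivity)
    _ = a*c+a*d+b*d := hrpinv _ (by positivity)

lemma corner {a b c d : ℝ} (ha : 0 ≤ a) (hb : 0 ≤ b) (hc : 0 ≤ c) (hd : 0 ≤ d) :
    (a^p+b^p)^(1/p) * (c^p+d^p)^(1/p) ≤ a*c + max (a*d) (b*c) + b*d := by
  rcases le_total (b*c) (a*d) with h | h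
  · have := corner_aux hp1 hp43 hp32 ha hb hc hd h
    have hm : a*d ≤ max (a*d) (b*c) := le_max_left _ _
    linarith
  · have := corner_aux hp1 hp43 hp32 hb ha hd hc (by nlinarith)
    have hm : b*c ≤ max (a*d) (b*c) := le_max_right _ _
    have e1 : (b^p+a^p) = (a^p+b^p) := by ring
    have e2 : (d^p+c^p) = (c^p+d^p) := by ring
    rw [e1, e2] at this
    linarith
end

/-! ### Finite support machinery -/

noncomputable def cubeF (d : ℕ) : Finset (Fin d → ℤ) :=
  Fintype.piFinset fun _ => Finset.Icc 0 1

noncomputable def cube2F (d : ℕ) : Finset (Fin d → ℤ) :=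
  Fintype.piFinset fun _ => Finset.Icc 0 2

lemma supp_cube {d : ℕ} {f : (Fin d → ℤ) → ℝ} (hf : SupportedInCube f) :
    ∀ x ∉ cubeF d, f x = 0 := by
  intro x hx
  apply hf
  intro hIC
  apply hx
  rw [cubeF, Fintype.mem_piFinset]
  intro i
  rw [Finset.mem_Icc]
  rcases hIC i with h | h <;> omega

lemma le_sum_cube {d : ℕ} {f : (Fin d → ℤ) → ℝ} (hf0 : ∀ x, 0 ≤ f x)
    (hf : SupportedInCube f) (u : Fin d → ℤ) : f u ≤ ∑ x ∈ cubeF d, f x := by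
  by_cases hu : u ∈ cubeF d
  · exact Finset.single_le_sum (fun x _ => hf0 x) hu
  · rw [supp_cube hf u hu]
    exact Finset.sum_nonneg fun x _ => hf0 x

lemma conv_bdd {d : ℕ} {f g : (Fin d → ℤ) → ℝ} (hf0 : ∀ x, 0 ≤ f x) (hg0 : ∀ x, 0 ≤ g x)
    (hf : SupportedInCube f) (hg : SupportedInCube g) (m : Fin d → ℤ) :
    BddAbove (Set.range fun u => f u * g (m - u)) := by
  refine ⟨(∑ x ∈ cubeF d, f x) * (∑ x ∈ cubeF d, g x), ?_⟩
  rintro y ⟨u, rfl⟩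
  exact mul_le_mul (le_sum_cube hf0 hf u) (le_sum_cube hg0 hg (m - u)) (hg0 _)
    (Finset.sum_nonneg fun x _ => hf0 x)

lemma supConv_nonneg {d : ℕ} {f g : (Fin d → ℤ) → ℝ} (hf0 : ∀ x, 0 ≤ f x)
    (hg0 : ∀ x, 0 ≤ g x) (m : Fin d → ℤ) : 0 ≤ supConv f g m :=
  Real.iSup_nonneg fun u => mul_nonneg (hf0 u) (hg0 _)

lemma supConv_eq_zero {d : ℕ} {f g : (Fin d → ℤ) → ℝ}
    (hf : SupportedInCube f) (hg : SupportedInCube g) :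
    ∀ m ∉ cube2F d, supConv f g m = 0 := by
  intro m hm
  have hterm : ∀ u : Fin d → ℤ, f u * g (m - u) = 0 := by
    intro u
    by_cases hu : InCube u
    · by_cases hv : InCube (m - u)
      · exfalso
        apply hm
        rw [cube2F, Fintype.mem_piFinset]
        intro i
        rw [Finset.mem_Icc]
        have h2' := hv i
        rw [Pi.sub_apply] at h2'
        rcases hu i with h1 | h1 <;> rcases h2' with h2 | h2 <;> omega
      · rw [hg _ hv, mul_zero]
    · rw [hf _ hu, zero_mul]
  show (⨆ u : Fin d → ℤ, f u * g (m - u)) = 0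
  calc (⨆ u : Fin d → ℤ, f u * g (m - u)) = ⨆ _ : (Fin d → ℤ), (0:ℝ) := iSup_congr hterm
    _ = 0 := ciSup_const

lemma rpow_supp_cube {d : ℕ} {f : (Fin d → ℤ) → ℝ} (hf : SupportedInCube f)
    {p : ℝ} (hp : p ≠ 0) : ∀ x ∉ cubeF d, f x ^ p = 0 := by
  intro x hx
  rw [supp_cube hf x hx, Real.zero_rpow hp]

/-! ### One-dimensional lemma over ℤ -/

lemma isup01 (h : ℤ → ℝ) (hnn : ∀ x, 0 ≤ h x)
    (hs : ∀ x : ℤ, x ≠ 0 → x ≠ 1 → h x = 0) :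
    (⨆ u : ℤ, h u) = max (h 0) (h 1) := by
  have hb : ∀ u, h u ≤ max (h 0) (h 1) := by
    intro u
    rcases eq_or_ne u 0 with rfl | h0
    · exact le_max_left _ _
    rcases eq_or_ne u 1 with rfl | h1
    · exact le_max_right _ _
    · rw [hs u h0 h1]
      exact le_trans (hnn 0) (le_max_left _ _)
  have hbdd : BddAbove (Set.range h) := ⟨max (h 0) (h 1), by rintro y ⟨u, rfl⟩; exact hb u⟩
  exact le_antisymm (ciSup_le hb) (max_le (le_ciSup hbdd 0) (le_ciSup hbdd 1))

lemma oneD {p : ℝ} (hp1 : 1 < p) (hp43 : p ≤ 4/3) (hp32 : (3:ℝ)^(p/2) = 2)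
    (F G : ℤ → ℝ) (hF0 : ∀ x, 0 ≤ F x) (hG0 : ∀ x, 0 ≤ G x)
    (hFs : ∀ x : ℤ, x ≠ 0 → x ≠ 1 → F x = 0) (hGs : ∀ x : ℤ, x ≠ 0 → x ≠ 1 → G x = 0) :
    (∑' u : ℤ, F u ^ p) ^ (1/p) * (∑' v : ℤ, G v ^ p) ^ (1/p) ≤
      ∑' m : ℤ, ⨆ u : ℤ, F u * G (m - u) := by
  have hp0 : (0:ℝ) < p := by linarith
  have hFtsum : ∑' u : ℤ, F u ^ p = F 0 ^ p + F 1 ^ p := by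
    rw [tsum_eq_sum (s := ({0,1} : Finset ℤ))
      (fun b hb => by
        simp only [Finset.mem_insert, Finset.mem_singleton] at hb
        push_neg at hb
        rw [hFs b hb.1 hb.2, Real.zero_rpow (ne_of_gt hp0)])]
    rw [Finset.sum_pair (by decide : (0:ℤ) ≠ 1)]
  have hGtsum : ∑' u : ℤ, G u ^ p = G 0 ^ p + G 1 ^ p := by
    rw [tsum_eq_sum (s := ({0,1} : Finset ℤ))
      (fun b hb => by
        simp only [Finset.mem_insert, Finset.mem_singleton] at hb
        push_neg at hb
        rw [hGs b hb.1 hb.2, Real.zero_rpow (ne_of_gt hp0)])]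
    rw [Finset.sum_pair (by decide : (0:ℤ) ≠ 1)]
  set h : ℤ → ℝ := fun m => ⨆ u : ℤ, F u * G (m - u) with hh
  have hsupp : ∀ m : ℤ, ∀ u : ℤ, (m ≠ 0 ∧ m ≠ 1 ∧ m ≠ 2) → F u * G (m - u) = 0 := by
    intro m u hm
    rcases eq_or_ne u 0 with rfl | h0
    · rw [hGs (m - 0) (by omega) (by omega), mul_zero]
    rcases eq_or_ne u 1 with rfl | h1
    · rw [hGs (m - 1) (by omega) (by omega), mul_zero]
    · rw [hFs u h0 h1, zero_mul]
  have hhtsum : ∑' m : ℤ, h m = h 0 + h 1 + h 2 := by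
    rw [tsum_eq_sum (s := ({0,1,2} : Finset ℤ))
      (fun b hb => by
        simp only [Finset.mem_insert, Finset.mem_singleton] at hb
        push_neg at hb
        calc h b = ⨆ _ : ℤ, (0:ℝ) :=
              iSup_congr fun u => hsupp b u ⟨hb.1, hb.2.1, hb.2.2⟩
          _ = 0 := ciSup_const)]
    rw [Finset.sum_insert (by decide), Finset.sum_insert (by decide), Finset.sum_singleton]
    ring
  have hmax : ∀ m : ℤ, h m = max (F 0 * G (m - 0)) (F 1 * G (m - 1)) := by
    intro m
    apply isup01
    · intro u; exact mul_nonneg (hF0 u) (hG0 _)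
    · intro u h0 h1; rw [hFs u h0 h1, zero_mul]
  have h0eq : h 0 = F 0 * G 0 := by
    rw [hmax 0]
    norm_num
    rw [hGs (-1) (by decide) (by decide), mul_zero]
    exact mul_nonneg (hF0 0) (hG0 0)
  have h1eq : h 1 = max (F 0 * G 1) (F 1 * G 0) := by
    rw [hmax 1]; norm_num
  have h2eq : h 2 = F 1 * G 1 := by
    rw [hmax 2]
    norm_num
    rw [hGs 2 (by decide) (by decide), mul_zero]
    exact mul_nonneg (hF0 1) (hG0 1)
  rw [hFtsum, hGtsum, hhtsum, h0eq, h1eq, h2eq]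
  have := corner hp1 hp43 hp32 (hF0 0) (hF0 1) (hG0 0) (hG0 1)
  linarith

/-! ### Induction over dimension -/

lemma tsum_rpow_nonneg {α : Type*} (f : α → ℝ) (hf : ∀ x, 0 ≤ f x) (p : ℝ) :
    0 ≤ ∑' x, f x ^ p :=
  tsum_nonneg fun x => Real.rpow_nonneg (hf x) _

lemma mainInd {p : ℝ} (hp1 : 1 < p) (hp43 : p ≤ 4/3) (hp32 : (3:ℝ)^(p/2) = 2) :
    ∀ (d : ℕ) (f g : (Fin d → ℤ) → ℝ),
      (∀ x, 0 ≤ f x) → (∀ x, 0 ≤ g x) → SupportedInCube f → SupportedInCube g →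
      (∑' u, f u ^ p) ^ (1/p) * (∑' v, g v ^ p) ^ (1/p) ≤ ∑' m, supConv f g m := by
  have hp0 : (0:ℝ) < p := by linarith
  have hrpinv : ∀ t : ℝ, 0 ≤ t → (t^p)^(1/p) = t := by
    intro t ht
    rw [← Real.rpow_mul ht, mul_one_div_cancel (ne_of_gt hp0), Real.rpow_one]
  have hrpinv' : ∀ t : ℝ, 0 ≤ t → (t^(1/p))^p = t := by
    intro t ht
    rw [← Real.rpow_mul ht, one_div_mul_cancel (ne_of_gt hp0), Real.rpow_one]
  intro d
  induction d with
  | zero =>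
    intro f g hf0 hg0 hf hg
    have hu : ∀ x : Fin 0 → ℤ, x = default := fun x => Subsingleton.elim x default
    have h1 : ∑' u : Fin 0 → ℤ, f u ^ p = f default ^ p :=
      tsum_eq_single default fun b hb => absurd (hu b) hb
    have h2 : ∑' v : Fin 0 → ℤ, g v ^ p = g default ^ p :=
      tsum_eq_single default fun b hb => absurd (hu b) hb
    have hsc : ∀ m : Fin 0 → ℤ, supConv f g m = f default * g default := by
      intro m
      show (⨆ u : Fin 0 → ℤ, f u * g (m - u)) = _
      calc (⨆ u : Fin 0 → ℤ, f u * g (m - u)) = ⨆ _ : Fin 0 → ℤ, f default * g default :=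
            iSup_congr fun u => by rw [hu u, hu (m - default)]
        _ = f default * g default := ciSup_const
    have h3 : ∑' m : Fin 0 → ℤ, supConv f g m = f default * g default :=
      (tsum_eq_single default fun b hb => absurd (hu b) hb).trans (hsc default)
    rw [h1, h2, h3, hrpinv _ (hf0 _), hrpinv _ (hg0 _)]
  | succ d IH =>
    intro f g hf0 hg0 hf hg
    -- the equivalence (ℤ × (Fin d → ℤ)) ≃ (Fin (d+1) → ℤ)
    set e : (ℤ × (Fin d → ℤ)) ≃ (Fin (d+1) → ℤ) :=
      { toFun := fun z => Fin.cons z.1 z.2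
        invFun := fun x => (x 0, Fin.tail x)
        left_inv := fun z => by simp
        right_inv := fun x => by simp } with he
    have he' : ∀ (x1 : ℤ) (x' : Fin d → ℤ), e (x1, x') = Fin.cons x1 x' := fun _ _ => rfl
    have hconssub : ∀ (m1 u1 : ℤ) (m' u' : Fin d → ℤ),
        Fin.cons m1 m' - Fin.cons u1 u' = (Fin.cons (m1 - u1) (m' - u') : Fin (d+1) → ℤ) := by
      intro m1 u1 m' u'
      funext i
      refine Fin.cases ?_ (fun j => ?_) i <;> simp
    -- slices
    set fs : ℤ → (Fin d → ℤ) → ℝ := fun x1 x' => f (Fin.cons x1 x') with hfs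
    set gs : ℤ → (Fin d → ℤ) → ℝ := fun x1 x' => g (Fin.cons x1 x') with hgs
    have hfs0 : ∀ x1 x', 0 ≤ fs x1 x' := fun x1 x' => hf0 _
    have hgs0 : ∀ x1 x', 0 ≤ gs x1 x' := fun x1 x' => hg0 _
    have hfssupp : ∀ x1, SupportedInCube (fs x1) := by
      intro x1 x' hx'
      apply hf
      intro hIC
      apply hx'
      intro i
      have := hIC i.succ
      rwa [Fin.cons_succ] at this
    have hgssupp : ∀ x1, SupportedInCube (gs x1) := by
      intro x1 x' hx'
      apply hg
      intro hIC
      apply hx'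
      intro i
      have := hIC i.succ
      rwa [Fin.cons_succ] at this
    set F : ℤ → ℝ := fun x1 => (∑' x', fs x1 x' ^ p) ^ (1/p) with hF
    set G : ℤ → ℝ := fun x1 => (∑' x', gs x1 x' ^ p) ^ (1/p) with hG
    have hF0 : ∀ x1, 0 ≤ F x1 := fun x1 =>
      Real.rpow_nonneg (tsum_rpow_nonneg _ (hfs0 x1) _) _
    have hG0 : ∀ x1, 0 ≤ G x1 := fun x1 =>
      Real.rpow_nonneg (tsum_rpow_nonneg _ (hgs0 x1) _) _
    have hFsupp : ∀ x1 : ℤ, x1 ≠ 0 → x1 ≠ 1 → F x1 = 0 := by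
      intro x1 h0 h1
      have hz : ∀ x' : Fin d → ℤ, fs x1 x' = 0 := by
        intro x'
        apply hf
        intro hIC
        have := hIC 0
        rw [Fin.cons_zero] at this
        tauto
      simp only [hF]
      rw [tsum_eq_sum (s := (∅ : Finset (Fin d → ℤ)))
        (fun b _ => by rw [hz b, Real.zero_rpow (ne_of_gt hp0)])]
      rw [Finset.sum_empty, Real.zero_rpow (ne_of_gt (one_div_pos.2 hp0))]
    have hGsupp : ∀ x1 : ℤ, x1 ≠ 0 → x1 ≠ 1 → G x1 = 0 := by
      intro x1 h0 h1
      have hz : ∀ x' : Fin d → ℤ, gs x1 x' = 0 := by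
        intro x'
        apply hg
        intro hIC
        have := hIC 0
        rw [Fin.cons_zero] at this
        tauto
      simp only [hG]
      rw [tsum_eq_sum (s := (∅ : Finset (Fin d → ℤ)))
        (fun b _ => by rw [hz b, Real.zero_rpow (ne_of_gt hp0)])]
      rw [Finset.sum_empty, Real.zero_rpow (ne_of_gt (one_div_pos.2 hp0))]
    -- summability facts
    have hsum_f : Summable fun x : Fin (d+1) → ℤ => f x ^ p :=
      summable_of_ne_finset_zero (s := cubeF (d+1)) (rpow_supp_cube hf (ne_of_gt hp0))
    have hsum_g : Summable fun x : Fin (d+1) → ℤ => g x ^ p :=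
      summable_of_ne_finset_zero (s := cubeF (d+1)) (rpow_supp_cube hg (ne_of_gt hp0))
    have hsum_fs : ∀ x1, Summable fun x' => fs x1 x' ^ p := fun x1 =>
      summable_of_ne_finset_zero (s := cubeF d) (rpow_supp_cube (hfssupp x1) (ne_of_gt hp0))
    have hsum_gs : ∀ x1, Summable fun x' => gs x1 x' ^ p := fun x1 =>
      summable_of_ne_finset_zero (s := cubeF d) (rpow_supp_cube (hgssupp x1) (ne_of_gt hp0))
    -- decomposition of the p-th moment sums
    have hsf : Summable fun z : ℤ × (Fin d → ℤ) => f (e z) ^ p :=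
      (Equiv.summable_iff (f := fun x => f x ^ p) e).2 hsum_f
    have hsg : Summable fun z : ℤ × (Fin d → ℤ) => g (e z) ^ p :=
      (Equiv.summable_iff (f := fun x => g x ^ p) e).2 hsum_g
    have hFdecomp : ∑' x : Fin (d+1) → ℤ, f x ^ p = ∑' x1 : ℤ, F x1 ^ p := by
      rw [← Equiv.tsum_eq e (fun x => f x ^ p)]
      calc ∑' (c : ℤ × (Fin d → ℤ)), f (e c) ^ p
          = ∑' (x1 : ℤ) (x' : Fin d → ℤ), f (e (x1, x')) ^ p :=
            Summable.tsum_prod' hsf (fun x1 => hsum_fs x1)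
        _ = ∑' x1 : ℤ, F x1 ^ p := by
            congr 1
            funext x1
            simp only [hF]
            rw [hrpinv' _ (tsum_rpow_nonneg _ (hfs0 x1) _)]
            rfl
    have hGdecomp : ∑' x : Fin (d+1) → ℤ, g x ^ p = ∑' x1 : ℤ, G x1 ^ p := by
      rw [← Equiv.tsum_eq e (fun x => g x ^ p)]
      calc ∑' (c : ℤ × (Fin d → ℤ)), g (e c) ^ p
          = ∑' (x1 : ℤ) (x' : Fin d → ℤ), g (e (x1, x')) ^ p :=
            Summable.tsum_prod' hsg (fun x1 => hsum_gs x1)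
        _ = ∑' x1 : ℤ, G x1 ^ p := by
            congr 1
            funext x1
            simp only [hG]
            rw [hrpinv' _ (tsum_rpow_nonneg _ (hgs0 x1) _)]
            rfl
    -- summability of sup-convolutions
    have hsum_conv : Summable (supConv f g) :=
      summable_of_ne_finset_zero (s := cube2F (d+1)) (supConv_eq_zero hf hg)
    have hsum_convs : ∀ (u1 v1 : ℤ), Summable (supConv (fs u1) (gs v1)) := fun u1 v1 =>
      summable_of_ne_finset_zero (s := cube2F d)
        (supConv_eq_zero (hfssupp u1) (hgssupp v1))
    have hsum_slice : ∀ m1 : ℤ, Summable fun m' => supConv f g (Fin.cons m1 m') := by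
      intro m1
      apply summable_of_ne_finset_zero (s := cube2F d)
      intro m' hm'
      apply supConv_eq_zero hf hg
      intro hmem
      apply hm'
      rw [cube2F, Fintype.mem_piFinset]
      intro i
      rw [cube2F, Fintype.mem_piFinset] at hmem
      have := hmem i.succ
      rwa [Fin.cons_succ] at this
    -- the middle inequality
    have hmid : ∀ m1 : ℤ, (⨆ u1 : ℤ, F u1 * G (m1 - u1)) ≤
        ∑' m', supConv f g (Fin.cons m1 m') := by
      intro m1
      apply ciSup_le
      intro u1
      have hIH := IH (fs u1) (gs (m1 - u1)) (hfs0 u1) (hgs0 _) (hfssupp u1) (hgssupp _)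
      refine le_trans hIH ?_
      apply Summable.tsum_le_tsum _ (hsum_convs u1 (m1 - u1)) (hsum_slice m1)
      intro m'
      show (⨆ u', fs u1 u' * gs (m1 - u1) (m' - u')) ≤ supConv f g (Fin.cons m1 m')
      apply ciSup_le
      intro u'
      have hterm : fs u1 u' * gs (m1 - u1) (m' - u') =
          f (Fin.cons u1 u') * g (Fin.cons m1 m' - Fin.cons u1 u') := by
        rw [hconssub]
      rw [hterm]
      exact le_ciSup (conv_bdd hf0 hg0 hf hg (Fin.cons m1 m')) (Fin.cons u1 u')
    -- decomposition of the convolution sum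
    have hconvdecomp : ∑' m : Fin (d+1) → ℤ, supConv f g m =
        ∑' m1 : ℤ, ∑' m', supConv f g (Fin.cons m1 m') := by
      rw [← Equiv.tsum_eq e (supConv f g)]
      have hsc : Summable fun z : ℤ × (Fin d → ℤ) => supConv f g (e z) :=
        (Equiv.summable_iff (f := supConv f g) e).2 hsum_conv
      calc ∑' (c : ℤ × (Fin d → ℤ)), supConv f g (e c)
          = ∑' (m1 : ℤ) (m' : Fin d → ℤ), supConv f g (e (m1, m')) :=
            Summable.tsum_prod' hsc (fun m1 => hsum_slice m1)
        _ = ∑' m1 : ℤ, ∑' m', supConv f g (Fin.cons m1 m') := rfl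
    -- 1-D summability of the sup-convolution of F and G
    have hsum_FG : Summable fun m1 : ℤ => ⨆ u1 : ℤ, F u1 * G (m1 - u1) := by
      apply summable_of_ne_finset_zero (s := ({0,1,2} : Finset ℤ))
      intro b hb
      simp only [Finset.mem_insert, Finset.mem_singleton] at hb
      push_neg at hb
      have hz : ∀ u1 : ℤ, F u1 * G (b - u1) = 0 := by
        intro u1
        rcases eq_or_ne u1 0 with rfl | h0
        · rw [hGsupp (b - 0) (by omega) (by omega), mul_zero]
        rcases eq_or_ne u1 1 with rfl | h1
        · rw [hGsupp (b - 1) (by omega) (by omega), mul_zero]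
        · rw [hFsupp u1 h0 h1, zero_mul]
      calc (⨆ u1 : ℤ, F u1 * G (b - u1)) = ⨆ _ : ℤ, (0:ℝ) := iSup_congr hz
        _ = 0 := ciSup_const
    have hsum_slice_sum : Summable fun m1 : ℤ => ∑' m', supConv f g (Fin.cons m1 m') := by
      apply summable_of_ne_finset_zero (s := ({0,1,2} : Finset ℤ))
      intro b hb
      simp only [Finset.mem_insert, Finset.mem_singleton] at hb
      push_neg at hb
      have hz : ∀ m' : Fin d → ℤ, supConv f g (Fin.cons b m') = 0 := by
        intro m'
        apply supConv_eq_zero hf hg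
        intro hmem
        rw [cube2F, Fintype.mem_piFinset] at hmem
        have := hmem 0
        rw [Fin.cons_zero, Finset.mem_Icc] at this
        omega
      simp only [hz]
      exact tsum_zero
    -- put it together
    calc (∑' u, f u ^ p) ^ (1/p) * (∑' v, g v ^ p) ^ (1/p)
        = (∑' u1 : ℤ, F u1 ^ p) ^ (1/p) * (∑' v1 : ℤ, G v1 ^ p) ^ (1/p) := by
          rw [hFdecomp, hGdecomp]
      _ ≤ ∑' m1 : ℤ, ⨆ u1 : ℤ, F u1 * G (m1 - u1) :=
          oneD hp1 hp43 hp32 F G hF0 hG0 hFsupp hGsupp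
      _ ≤ ∑' m1 : ℤ, ∑' m', supConv f g (Fin.cons m1 m') :=
          Summable.tsum_le_tsum hmid hsum_FG hsum_slice_sum
      _ = ∑' m : Fin (d+1) → ℤ, supConv f g m := hconvdecomp.symm

end PLH

theorem prekopa_leindler_hypercube (d : ℕ) (hd : 1 ≤ d)
    (f g : (Fin d → ℤ) → ℝ) (hf0 : ∀ x, 0 ≤ f x) (hg0 : ∀ x, 0 ≤ g x)
    (hf : SupportedInCube f) (hg : SupportedInCube g) :
    (∑' u : Fin d → ℤ, f u ^ (2 / Real.logb 2 3)) ^ (Real.logb 2 3 / 2) *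
        (∑' v : Fin d → ℤ, g v ^ (2 / Real.logb 2 3)) ^ (Real.logb 2 3 / 2) ≤
      ∑' m : Fin d → ℤ, supConv f g m := by
  set p : ℝ := 2 / Real.logb 2 3 with hp
  have hlog2 : (0:ℝ) < Real.log 2 := Real.log_pos (by norm_num)
  have hlog3 : (0:ℝ) < Real.log 3 := Real.log_pos (by norm_num)
  have hlogb : Real.logb 2 3 = Real.log 3 / Real.log 2 := rfl
  have hlogbpos : 0 < Real.logb 2 3 := by rw [hlogb]; positivity
  have hp1 : 1 < p := by
    rw [hp, hlogb, lt_div_iff₀ (by positivity)]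
    rw [one_mul, div_lt_iff₀ hlog2]
    have h43 : Real.log 3 < 2 * Real.log 2 := by
      have : Real.log 3 < Real.log 4 := Real.log_lt_log (by norm_num) (by norm_num)
      rw [show (4:ℝ) = 2^2 by norm_num, Real.log_pow] at this
      push_cast at this
      linarith
    linarith
  have h98 : 3 * Real.log 2 ≤ 2 * Real.log 3 := by
    have : Real.log 8 ≤ Real.log 9 := Real.log_le_log (by norm_num) (by norm_num)
    rw [show (8:ℝ) = 2^3 by norm_num, show (9:ℝ) = 3^2 by norm_num,
      Real.log_pow, Real.log_pow] at this
    push_cast at this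
    linarith
  have hp43 : p ≤ 4/3 := by
    rw [hp, div_le_div_iff₀ hlogbpos (by norm_num : (0:ℝ) < 3), hlogb,
      ← mul_div_assoc, le_div_iff₀ hlog2]
    linarith
  have hp32 : (3:ℝ)^(p/2) = 2 := by
    have hpe : p/2 = Real.logb 3 2 := by
      rw [hp, Real.logb, Real.logb]
      field_simp
    rw [hpe]
    exact Real.rpow_logb (by norm_num) (by norm_num) (by norm_num)
  have h1p : 1/p = Real.logb 2 3 / 2 := by
    rw [hp, one_div_div]
  have := PLH.mainInd hp1 hp43 hp32 d f g hf0 hg0 hf hg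
  rwa [h1p] at this
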